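/- For complex n×n matrices A and B, every eigenvalue μ of B satisfies: min over eigenvalues λ of A of |λ − μ| is at most n^{1/n} · ‖A − B‖_∞^{1/n} · (‖A‖_∞ + ‖B‖_∞)^{1 − 1/n}, where ‖·‖_∞ is the induced matrix infinity norm. -/

import Mathlib

open Matrix

noncomputable def cInfNorm {n : ℕ} (M : Matrix (Fin n) (Fin n) ℂ) : ℝ :=
  ⨆ i, ∑ j, ‖M i j‖

namespace ElsnerAux

open Finset Polynomial

variable {n : ℕ}

lemma rowsum_le (M : Matrix (Fin n) (Fin n) ℂ) (i : Fin n) :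
    ∑ j, ‖M i j‖ ≤ cInfNorm M := by
  unfold cInfNorm
  exact le_ciSup (f := fun i => ∑ j, ‖M i j‖)
    (Set.Finite.bddAbove (Set.finite_range _)) i

lemma cInfNorm_nonneg (hn : 0 < n) (M : Matrix (Fin n) (Fin n) ℂ) : 0 ≤ cInfNorm M :=
  le_trans (Finset.sum_nonneg fun _ _ => (norm_nonneg _)) (rowsum_le M ⟨0, hn⟩)

lemma abs_det_le (M : Matrix (Fin n) (Fin n) ℂ) :
    ‖M.det‖ ≤ ∏ i, ∑ j, ‖M i j‖ := by
  rw [← Matrix.det_transpose, Matrix.det_apply]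
  calc ‖∑ σ : Equiv.Perm (Fin n), Equiv.Perm.sign σ • ∏ i, Mᵀ (σ i) i‖
      ≤ ∑ σ : Equiv.Perm (Fin n), ‖Equiv.Perm.sign σ • ∏ i, Mᵀ (σ i) i‖ :=
        norm_sum_le _ _
    _ = ∑ σ : Equiv.Perm (Fin n), ∏ i, ‖M i (σ i)‖ := by
        refine Finset.sum_congr rfl fun σ _ => ?_
        rw [norm_units_zsmul, norm_prod]
        simp [Matrix.transpose_apply]
    _ ≤ ∑ f : Fin n → Fin n, ∏ i, ‖M i (f i)‖ := by
        have hinj : Function.Injective (fun σ : Equiv.Perm (Fin n) => (σ : Fin n → Fin n)) :=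
          fun σ τ h => Equiv.ext (congrFun h)
        have himg : ∑ f ∈ (Finset.univ : Finset (Equiv.Perm (Fin n))).image
              (fun σ : Equiv.Perm (Fin n) => (σ : Fin n → Fin n)),
              ∏ i, ‖M i (f i)‖ =
            ∑ σ : Equiv.Perm (Fin n), ∏ i, ‖M i (σ i)‖ :=
          Finset.sum_image fun σ _ τ _ h => hinj h
        rw [← himg]
        exact Finset.sum_le_sum_of_subset_of_nonneg (Finset.subset_univ _)
          (fun f _ _ => Finset.prod_nonneg fun _ _ => norm_nonneg _)
    _ = ∏ i, ∑ j, ‖M i j‖ := by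
        rw [Finset.prod_univ_sum]
        simp

lemma mem_spectrum_iff_det (A : Matrix (Fin n) (Fin n) ℂ) (z : ℂ) :
    z ∈ spectrum ℂ A ↔ ((z • 1 : Matrix (Fin n) (Fin n) ℂ) - A).det = 0 := by
  rw [spectrum.mem_iff, Algebra.algebraMap_eq_smul_one, Matrix.isUnit_iff_isUnit_det,
    isUnit_iff_ne_zero, not_ne_iff]

lemma eval_charpoly' (A : Matrix (Fin n) (Fin n) ℂ) (z : ℂ) :
    (Matrix.charpoly A).eval z = ((z • 1 : Matrix (Fin n) (Fin n) ℂ) - A).det := by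
  have h1 : (Matrix.charpoly A).eval z = (Polynomial.evalRingHom z) (Matrix.charmatrix A).det := rfl
  rw [h1, RingHom.map_det]
  congr 1
  ext i j
  by_cases h : i = j
  · subst h
    simp [Matrix.charmatrix_apply_eq, Matrix.one_apply]
  · simp [Matrix.charmatrix_apply_ne _ _ _ h, Matrix.one_apply_ne h]

lemma abs_eig_le (hn : 0 < n) (B : Matrix (Fin n) (Fin n) ℂ) (μ : ℂ)
    (h : ((μ • 1 : Matrix (Fin n) (Fin n) ℂ) - B).det = 0) : ‖μ‖ ≤ cInfNorm B := by
  obtain ⟨v, hv0, hv⟩ := (Matrix.exists_mulVec_eq_zero_iff).2 h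
  obtain ⟨i, -, hi⟩ := Finset.exists_max_image Finset.univ (fun i => ‖v i‖)
    ⟨⟨0, hn⟩, Finset.mem_univ _⟩
  have hvi : 0 < ‖v i‖ := by
    obtain ⟨j, hj⟩ := Function.ne_iff.1 hv0
    exact lt_of_lt_of_le (by simpa using hj) (hi j (Finset.mem_univ j))
  have hBv : B *ᵥ v = μ • v := by
    have h1 : ((μ • (1 : Matrix (Fin n) (Fin n) ℂ)) - B) *ᵥ v = μ • v - B *ᵥ v := by
      rw [Matrix.sub_mulVec, Matrix.smul_mulVec, Matrix.one_mulVec]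
    rw [h1] at hv
    exact (sub_eq_zero.mp hv).symm
  have key : ‖μ‖ * ‖v i‖ ≤ cInfNorm B * ‖v i‖ := by
    have h2 : ‖μ‖ * ‖v i‖ = ‖(B *ᵥ v) i‖ := by
      rw [hBv]
      simp [Pi.smul_apply, smul_eq_mul, norm_mul]
    rw [h2]
    calc ‖(B *ᵥ v) i‖ = ‖∑ j, B i j * v j‖ := by
          simp [Matrix.mulVec, dotProduct]
      _ ≤ ∑ j, ‖B i j‖ * ‖v j‖ := by
          refine le_trans (norm_sum_le _ _) ?_
          simp [norm_mul]
      _ ≤ ∑ j, ‖B i j‖ * ‖v i‖ := by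
          refine Finset.sum_le_sum fun j _ => ?_
          exact mul_le_mul_of_nonneg_left (hi j (Finset.mem_univ j)) (norm_nonneg _)
      _ = (∑ j, ‖B i j‖) * ‖v i‖ := by rw [Finset.sum_mul]
      _ ≤ cInfNorm B * ‖v i‖ :=
          mul_le_mul_of_nonneg_right (rowsum_le B i) (norm_nonneg _)
  exact le_of_mul_le_mul_right key hvi

lemma pow_card_le_prod' (s : Multiset ℝ) (c : ℝ) (hc : 0 ≤ c) (h : ∀ x ∈ s, c ≤ x) :
    c ^ (Multiset.card s) ≤ s.prod := by
  induction s using Multiset.induction_on with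
  | empty => simp
  | cons a s ih =>
    have ha : c ≤ a := h a (Multiset.mem_cons_self a s)
    have hs := ih (fun x hx => h x (Multiset.mem_cons_of_mem hx))
    rw [Multiset.card_cons, Multiset.prod_cons, pow_succ']
    exact mul_le_mul ha hs (pow_nonneg hc _) (le_trans hc ha)

/-- Core determinant bound: `|det (μ•1 - A)| ≤ n * ‖A-B‖ * (‖A‖+‖B‖)^(n-1)`. -/
lemma det_bound (hn : 0 < n) (A B : Matrix (Fin n) (Fin n) ℂ) (μ : ℂ)
    (h : ((μ • 1 : Matrix (Fin n) (Fin n) ℂ) - B).det = 0) :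
    ‖((μ • 1 : Matrix (Fin n) (Fin n) ℂ) - A).det‖ ≤
      (n : ℝ) * cInfNorm (A - B) * (cInfNorm A + cInfNorm B) ^ (n - 1) := by
  classical
  have hμB : ‖μ‖ ≤ cInfNorm B := abs_eig_le hn B μ h
  have hdetT : (((μ • 1 : Matrix (Fin n) (Fin n) ℂ) - B)ᵀ).det = 0 := by
    rw [Matrix.det_transpose]; exact h
  obtain ⟨w, hw0, hw⟩ := (Matrix.exists_mulVec_eq_zero_iff).2 hdetT
  obtain ⟨i0, -, hi0⟩ := Finset.exists_max_image Finset.univ (fun i => ‖w i‖)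
    ⟨⟨0, hn⟩, Finset.mem_univ _⟩
  have hwi : 0 < ‖w i0‖ := by
    obtain ⟨j, hj⟩ := Function.ne_iff.1 hw0
    exact lt_of_lt_of_le (by simpa using hj) (hi0 j (Finset.mem_univ j))
  set C : Matrix (Fin n) (Fin n) ℂ := (μ • 1 : Matrix (Fin n) (Fin n) ℂ) - A with hC
  have hvm : w ᵥ* ((μ • 1 : Matrix (Fin n) (Fin n) ℂ) - B) = 0 := by
    rw [← Matrix.mulVec_transpose]; exact hw
  have hwC : w ᵥ* C = w ᵥ* (B - A) := by
    have hsplit : C = ((μ • 1 : Matrix (Fin n) (Fin n) ℂ) - B) + (B - A) := by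
      rw [hC]; abel
    rw [hsplit, Matrix.vecMul_add, hvm, zero_add]
  -- the updated matrix
  set W : Matrix (Fin n) (Fin n) ℂ := C.updateRow i0 (w ᵥ* C) with hW
  have hdetW : W.det = w i0 * C.det := by
    have hv : w ᵥ* C = ∑ k, w k • C k := by
      funext j
      simp [Matrix.vecMul, dotProduct, Finset.sum_apply, Pi.smul_apply, smul_eq_mul]
    rw [hW, hv, Matrix.det_updateRow_sum, smul_eq_mul]
  -- row sums of W
  have hrow_ne : ∀ i, i ≠ i0 → ∑ j, ‖W i j‖ ≤ cInfNorm A + cInfNorm B := by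
    intro i hi
    have hWi : ∀ j, W i j = C i j := fun j => by rw [hW, Matrix.updateRow_ne hi]
    have : ∑ j, ‖W i j‖ ≤
        ∑ j, (‖(μ • (1 : Matrix (Fin n) (Fin n) ℂ)) i j‖ + ‖A i j‖) := by
      refine Finset.sum_le_sum fun j _ => ?_
      rw [hWi j, hC]
      have htri := norm_add_le ((μ • (1 : Matrix (Fin n) (Fin n) ℂ)) i j) (-(A i j))
      simpa [Matrix.sub_apply, sub_eq_add_neg] using htri
    refine le_trans this ?_
    rw [Finset.sum_add_distrib]
    have h1 : ∑ j, ‖(μ • (1 : Matrix (Fin n) (Fin n) ℂ)) i j‖ = ‖μ‖ := by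
      simp [Matrix.smul_apply, Matrix.one_apply, apply_ite, Finset.sum_ite_eq]
    rw [h1]
    have h2 := rowsum_le A i
    linarith [hμB]
  have hrow_i0 : ∑ j, ‖W i0 j‖ ≤
      (n : ℝ) * (‖w i0‖ * cInfNorm (A - B)) := by
    have hWi0 : ∀ j, W i0 j = (w ᵥ* (B - A)) j := fun j => by
      rw [hW, Matrix.updateRow_self, hwC]
    calc ∑ j, ‖W i0 j‖ = ∑ j, ‖∑ i, w i * (B - A) i j‖ := by
          refine Finset.sum_congr rfl fun j _ => ?_
          rw [hWi0 j]
          simp [Matrix.vecMul, dotProduct]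
      _ ≤ ∑ j, ∑ i, ‖w i‖ * ‖(B - A) i j‖ := by
          refine Finset.sum_le_sum fun j _ => ?_
          refine le_trans (norm_sum_le _ _) ?_
          simp [norm_mul]
      _ = ∑ i, ‖w i‖ * ∑ j, ‖(B - A) i j‖ := by
          rw [Finset.sum_comm]
          simp [Finset.mul_sum]
      _ ≤ ∑ i : Fin n, ‖w i0‖ * cInfNorm (A - B) := by
          refine Finset.sum_le_sum fun i _ => ?_
          have hBA : ∑ j, ‖(B - A) i j‖ = ∑ j, ‖(A - B) i j‖ := by
            refine Finset.sum_congr rfl fun j _ => ?_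
            have hneg : (B - A) i j = -((A - B) i j) := by
              rw [Matrix.sub_apply, Matrix.sub_apply]; ring
            rw [hneg, norm_neg]
          refine mul_le_mul (hi0 i (Finset.mem_univ i)) ?_ ?_ (norm_nonneg _)
          · rw [hBA]; exact rowsum_le (A - B) i
          · exact Finset.sum_nonneg fun _ _ => norm_nonneg _
      _ = (n : ℝ) * (‖w i0‖ * cInfNorm (A - B)) := by
          rw [Finset.sum_const, Finset.card_univ, Fintype.card_fin, nsmul_eq_mul]
  -- combine
  have hprod : ‖W.det‖ ≤
      ((n : ℝ) * (‖w i0‖ * cInfNorm (A - B))) *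
        (cInfNorm A + cInfNorm B) ^ (n - 1) := by
    refine le_trans (abs_det_le W) ?_
    rw [← Finset.mul_prod_erase Finset.univ _ (Finset.mem_univ i0)]
    have hd0 : 0 ≤ cInfNorm (A - B) := cInfNorm_nonneg hn _
    refine mul_le_mul hrow_i0 ?_ ?_ ?_
    · calc ∏ i ∈ Finset.univ.erase i0, ∑ j, ‖W i j‖
          ≤ ∏ _i ∈ Finset.univ.erase i0, (cInfNorm A + cInfNorm B) := by
            refine Finset.prod_le_prod (fun i _ => Finset.sum_nonneg fun _ _ => norm_nonneg _)
              (fun i hi => hrow_ne i (Finset.ne_of_mem_erase hi))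
        _ = (cInfNorm A + cInfNorm B) ^ (n - 1) := by
            rw [Finset.prod_const, Finset.card_erase_of_mem (Finset.mem_univ i0),
              Finset.card_univ, Fintype.card_fin]
    · exact Finset.prod_nonneg fun i _ => Finset.sum_nonneg fun _ _ => norm_nonneg _
    · positivity
  have hfinal : ‖w i0‖ * ‖C.det‖ ≤
      ‖w i0‖ * ((n : ℝ) * cInfNorm (A - B) * (cInfNorm A + cInfNorm B) ^ (n - 1)) := by
    have : ‖w i0‖ * ‖C.det‖ = ‖W.det‖ := by
      rw [hdetW, norm_mul]
    rw [this]
    calc ‖W.det‖ ≤ ((n : ℝ) * (‖w i0‖ * cInfNorm (A - B))) *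
          (cInfNorm A + cInfNorm B) ^ (n - 1) := hprod
      _ = ‖w i0‖ *
          ((n : ℝ) * cInfNorm (A - B) * (cInfNorm A + cInfNorm B) ^ (n - 1)) := by ring
  exact le_of_mul_le_mul_left hfinal hwi

end ElsnerAux

open ElsnerAux Polynomial

theorem stmt18 {n : ℕ} (hn : 0 < n) (A B : Matrix (Fin n) (Fin n) ℂ)
    (μ : ℂ) (hμ : μ ∈ spectrum ℂ B) :
    ∃ lam ∈ spectrum ℂ A,
      ‖lam - μ‖ ≤
        (n : ℝ) ^ ((1 : ℝ) / n) * (cInfNorm (A - B)) ^ ((1 : ℝ) / n) *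
          (cInfNorm A + cInfNorm B) ^ (1 - (1 : ℝ) / n) := by
  classical
  have hdetB : ((μ • 1 : Matrix (Fin n) (Fin n) ℂ) - B).det = 0 :=
    (mem_spectrum_iff_det B μ).1 hμ
  -- roots of charpoly of A
  set p := Matrix.charpoly A with hp
  have hmonic : p.Monic := Matrix.charpoly_monic A
  have hsplits : p.Splits := IsAlgClosed.splits p
  have hdeg : p.natDegree = n := by
    rw [hp, Matrix.charpoly_natDegree_eq_dim, Fintype.card_fin]
  have hcard : Multiset.card p.roots = n := by
    rw [← hdeg, hsplits.natDegree_eq_card_roots]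
  have hne : p.roots.toFinset.Nonempty := by
    rw [Multiset.toFinset_nonempty]
    intro h0
    rw [h0] at hcard
    simp at hcard
    omega
  obtain ⟨lam, hlam, hlammin⟩ := Finset.exists_min_image p.roots.toFinset
    (fun z => ‖z - μ‖) hne
  have hlamroot : lam ∈ p.roots := Multiset.mem_toFinset.1 hlam
  have hlamspec : lam ∈ spectrum ℂ A := by
    rw [mem_spectrum_iff_det, ← eval_charpoly']
    exact (Polynomial.mem_roots (hmonic.ne_zero)).1 hlamroot
  refine ⟨lam, hlamspec, ?_⟩
  set m := ‖lam - μ‖ with hm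
  have hm0 : 0 ≤ m := norm_nonneg _
  -- m ^ n ≤ |p.eval μ|
  have hpow : m ^ n ≤ ‖p.eval μ‖ := by
    have hpe : p = (p.roots.map fun a => X - C a).prod :=
      hsplits.eq_prod_roots_of_monic hmonic
    have habs : ∀ (s : Multiset ℂ), ‖s.prod‖ = (s.map (‖·‖)).prod := by
      intro s
      induction s using Multiset.induction_on with
      | empty => simp
      | cons a s ih => simp [norm_mul, ih]
    have heval : ‖p.eval μ‖ = (p.roots.map fun a => ‖μ - a‖).prod := by
      conv_lhs => rw [hpe]
      rw [Polynomial.eval_multiset_prod, Multiset.map_map, habs, Multiset.map_map]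
      refine congrArg Multiset.prod (Multiset.map_congr rfl fun a _ => ?_)
      simp
    rw [heval]
    have hcard' : Multiset.card (p.roots.map fun a => ‖μ - a‖) = n := by
      rw [Multiset.card_map, hcard]
    rw [← hcard']
    refine pow_card_le_prod' _ _ hm0 ?_
    intro x hx
    obtain ⟨a, ha, rfl⟩ := Multiset.mem_map.1 hx
    have := hlammin a (Multiset.mem_toFinset.2 ha)
    rw [hm]
    calc ‖lam - μ‖ ≤ ‖a - μ‖ := this
      _ = ‖μ - a‖ := norm_sub_rev a μ
  -- |p.eval μ| = |det(μ•1 - A)| ≤ K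
  have hK : m ^ n ≤ (n : ℝ) * cInfNorm (A - B) * (cInfNorm A + cInfNorm B) ^ (n - 1) := by
    refine le_trans hpow ?_
    rw [eval_charpoly']
    exact det_bound hn A B μ hdetB
  -- rpow manipulation
  have hd0 : 0 ≤ cInfNorm (A - B) := cInfNorm_nonneg hn _
  have hcAB : 0 ≤ cInfNorm A + cInfNorm B := by
    have := cInfNorm_nonneg hn A; have := cInfNorm_nonneg hn B; linarith
  have hn0 : (n : ℝ) ≠ 0 := Nat.cast_ne_zero.2 hn.ne'
  have hKnn : 0 ≤ (n : ℝ) * cInfNorm (A - B) * (cInfNorm A + cInfNorm B) ^ (n - 1) := by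
    positivity
  have hmle : m ≤ ((n : ℝ) * cInfNorm (A - B) * (cInfNorm A + cInfNorm B) ^ (n - 1))
      ^ ((1 : ℝ) / n) := by
    have h1 : m = (m ^ n) ^ ((1 : ℝ) / n) := by
      rw [← Real.rpow_natCast m n, ← Real.rpow_mul hm0, mul_one_div, div_self hn0,
        Real.rpow_one]
    rw [h1]
    exact Real.rpow_le_rpow (pow_nonneg hm0 n) hK (by positivity)
  refine le_trans hmle ?_
  rw [Real.mul_rpow (by positivity) (by positivity), Real.mul_rpow (by positivity) hd0]
  have hlast : ((cInfNorm A + cInfNorm B) ^ (n - 1)) ^ ((1 : ℝ) / n) =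
      (cInfNorm A + cInfNorm B) ^ (1 - (1 : ℝ) / n) := by
    rw [← Real.rpow_natCast (cInfNorm A + cInfNorm B) (n - 1), ← Real.rpow_mul hcAB]
    congr 1
    have : ((n - 1 : ℕ) : ℝ) = (n : ℝ) - 1 := by
      rw [Nat.cast_sub hn]
      simp
    rw [this]
    field_simp
  rw [hlast]
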